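/- Let 𝒫 = (1743/4096) · ∏_{primes ℓ ≥ 3} (1 − (2/ℓ − 1/ℓ²)^ℓ) and 𝒫₀ = (1743/4096) · ∏_{ℓ ∈ {3,5,7,11,13}} (1 − (2/ℓ − 1/ℓ²)^ℓ). Then 𝒫₀ · ∏_{primes ℓ ≥ 17} (1 − 1/ℓ⁴) < 𝒫 < 𝒫₀. -/

import Mathlib

open Real

lemma hasProd_exp_aux {ι : Type*} (f : ι → ℝ) (h0 : ∀ i, 0 < f i)
    (hs : Summable fun i => Real.log (f i)) :
    HasProd f (Real.exp (∑' i, Real.log (f i))) := by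
  exact Real.hasProd_of_hasSum_log h0 hs.hasSum

lemma neg_log_le_aux {t : ℝ} (h0 : 0 ≤ t) (h2 : t ≤ 1/2) : -Real.log (1 - t) ≤ 2 * t := by
  have h1 : (0:ℝ) < 1 - t := by linarith
  have hexp : Real.exp (-(2*t)) ≤ 1 - t := by
    have := Real.add_one_le_exp (2*t)
    have hpos : (0:ℝ) < 1 + 2*t := by linarith
    have : Real.exp (-(2*t)) ≤ 1 / (1 + 2*t) := by
      rw [Real.exp_neg, inv_eq_one_div]
      exact one_div_le_one_div_of_le hpos (by linarith)
    have h14 : 1 / (1 + 2*t) ≤ 1 - t := by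
      rw [div_le_iff₀ hpos]; nlinarith
    linarith
  have := (Real.le_log_iff_exp_le h1).mpr hexp
  linarith

lemma nat_pow_aux {ℓ : ℕ} (h : 17 ≤ ℓ) : 2 ^ ℓ * ℓ ^ 4 ≤ ℓ ^ ℓ := by
  have h1 : 2 ^ ℓ ≤ 16 ^ (ℓ - 4) := by
    calc 2 ^ ℓ ≤ 2 ^ (4 * (ℓ - 4)) := Nat.pow_le_pow_right (by norm_num) (by omega)
    _ = 16 ^ (ℓ - 4) := by rw [pow_mul]; norm_num
  have h2 : 16 ^ (ℓ - 4) ≤ ℓ ^ (ℓ - 4) := Nat.pow_le_pow_left (by omega) _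
  calc 2 ^ ℓ * ℓ ^ 4 ≤ ℓ ^ (ℓ - 4) * ℓ ^ 4 := Nat.mul_le_mul_right _ (h1.trans h2)
  _ = ℓ ^ ℓ := by rw [← pow_add]; congr 1; omega

/-- basic bounds on `t = (2/ℓ - 1/ℓ²)^ℓ` for `ℓ ≥ 3`. -/
lemma t_bounds {ℓ : ℕ} (h : 3 ≤ ℓ) :
    0 < (2/(ℓ:ℝ) - 1/(ℓ:ℝ)^2)^ℓ ∧ (2/(ℓ:ℝ) - 1/(ℓ:ℝ)^2)^ℓ ≤ (2/3:ℝ)^ℓ ∧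
      ((2:ℝ)/3)^ℓ ≤ 1/2 := by
  have hL : (3:ℝ) ≤ (ℓ:ℝ) := by exact_mod_cast h
  have hL0 : (0:ℝ) < (ℓ:ℝ) := by linarith
  have hx0 : 0 < 2/(ℓ:ℝ) - 1/(ℓ:ℝ)^2 := by
    rw [sub_pos, div_lt_div_iff₀ (by positivity) hL0]; nlinarith
  have hx23 : 2/(ℓ:ℝ) - 1/(ℓ:ℝ)^2 ≤ 2/3 := by
    have h2 : 2/(ℓ:ℝ) ≤ 2/3 := by
      rw [div_le_div_iff₀ hL0 (by norm_num)]; nlinarith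
    have : 0 < 1/(ℓ:ℝ)^2 := by positivity
    linarith
  refine ⟨pow_pos hx0 _, pow_le_pow_left₀ hx0.le hx23 _, ?_⟩
  calc ((2:ℝ)/3)^ℓ ≤ (2/3:ℝ)^3 := by
        apply pow_le_pow_of_le_one (by norm_num) (by norm_num) h
  _ ≤ 1/2 := by norm_num

lemma summable_logF_aux (s : Set ℕ) (hs : ∀ ℓ ∈ s, 3 ≤ ℓ) :
    Summable (fun a : s => Real.log (1 - (2/((a:ℕ):ℝ) - 1/((a:ℕ):ℝ)^2)^(a:ℕ))) := by
  rw [← summable_neg_iff]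
  apply Summable.of_nonneg_of_le (f := fun a : s => 2 * ((2:ℝ)/3)^(a:ℕ))
  · intro a
    obtain ⟨ht0, ht23, h23⟩ := t_bounds (hs a a.2)
    have : (1 : ℝ) - (2/((a:ℕ):ℝ) - 1/((a:ℕ):ℝ)^2)^(a:ℕ) ≤ 1 := by linarith
    have hpos : (0:ℝ) < 1 - (2/((a:ℕ):ℝ) - 1/((a:ℕ):ℝ)^2)^(a:ℕ) := by linarith
    simpa using Real.log_nonpos hpos.le this
  · intro a
    obtain ⟨ht0, ht23, h23⟩ := t_bounds (hs a a.2)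
    have h1 := neg_log_le_aux ht0.le (le_trans ht23 h23)
    have h2 : 2 * (2/((a:ℕ):ℝ) - 1/((a:ℕ):ℝ)^2)^(a:ℕ) ≤ 2 * ((2:ℝ)/3)^(a:ℕ) := by linarith
    linarith
  · exact ((summable_geometric_of_lt_one (by norm_num) (by norm_num)).mul_left 2).subtype s

lemma summable_logG_aux :
    Summable (fun a : {ℓ : ℕ // ℓ.Prime ∧ 17 ≤ ℓ} => Real.log (1 - 1/((a:ℕ):ℝ)^4)) := by
  rw [← summable_neg_iff]
  apply Summable.of_nonneg_of_le (f := fun a : {ℓ : ℕ // ℓ.Prime ∧ 17 ≤ ℓ} => 2 * (1/((a:ℕ):ℝ)^4))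
  · intro a
    have h17 : (17:ℝ) ≤ ((a:ℕ):ℝ) := by exact_mod_cast a.2.2
    have ht0 : (0:ℝ) < 1/((a:ℕ):ℝ)^4 := by positivity
    have ht2 : 1/((a:ℕ):ℝ)^4 ≤ 1/2 := by
      rw [div_le_div_iff₀ (by positivity) (by norm_num)]; nlinarith [pow_le_pow_left₀ (by norm_num : (0:ℝ) ≤ 17) h17 4]
    have hpos : (0:ℝ) < 1 - 1/((a:ℕ):ℝ)^4 := by linarith
    simpa using Real.log_nonpos hpos.le (by linarith)
  · intro a
    have h17 : (17:ℝ) ≤ ((a:ℕ):ℝ) := by exact_mod_cast a.2.2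
    have ht0 : (0:ℝ) < 1/((a:ℕ):ℝ)^4 := by positivity
    have ht2 : 1/((a:ℕ):ℝ)^4 ≤ 1/2 := by
      rw [div_le_div_iff₀ (by positivity) (by norm_num)]; nlinarith [pow_le_pow_left₀ (by norm_num : (0:ℝ) ≤ 17) h17 4]
    exact neg_log_le_aux ht0.le ht2
  · exact ((summable_one_div_nat_pow.mpr (by norm_num)).mul_left 2).subtype _

/-- key comparison: for `ℓ ≥ 17`, `(2/ℓ - 1/ℓ²)^ℓ < 1/ℓ⁴`. -/
lemma key_lt_aux {ℓ : ℕ} (h : 17 ≤ ℓ) :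
    (2/(ℓ:ℝ) - 1/(ℓ:ℝ)^2)^ℓ < 1/(ℓ:ℝ)^4 := by
  have hL : (17:ℝ) ≤ (ℓ:ℝ) := by exact_mod_cast h
  have hL0 : (0:ℝ) < (ℓ:ℝ) := by linarith
  have hx0 : 0 < 2/(ℓ:ℝ) - 1/(ℓ:ℝ)^2 := by
    rw [sub_pos, div_lt_div_iff₀ (by positivity) hL0]; nlinarith
  have hxlt : 2/(ℓ:ℝ) - 1/(ℓ:ℝ)^2 < 2/(ℓ:ℝ) := by
    have : (0:ℝ) < 1/(ℓ:ℝ)^2 := by positivity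
    linarith
  calc (2/(ℓ:ℝ) - 1/(ℓ:ℝ)^2)^ℓ < (2/(ℓ:ℝ))^ℓ :=
        pow_lt_pow_left₀ hxlt hx0.le (by omega)
  _ ≤ 1/(ℓ:ℝ)^4 := by
      rw [div_pow, div_le_div_iff₀ (by positivity) (by positivity)]
      have := nat_pow_aux h
      calc (2:ℝ)^ℓ * (ℓ:ℝ)^4 = ((2^ℓ * ℓ^4 : ℕ) : ℝ) := by push_cast; ring
      _ ≤ ((ℓ^ℓ : ℕ) : ℝ) := by exact_mod_cast this
      _ = 1 * (ℓ:ℝ)^ℓ := by push_cast; ring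

lemma set_split_aux :
    ({ℓ : ℕ | ℓ.Prime ∧ 3 ≤ ℓ} : Set ℕ) =
      ↑({3, 5, 7, 11, 13} : Finset ℕ) ∪ {ℓ : ℕ | ℓ.Prime ∧ 17 ≤ ℓ} := by
  ext ℓ
  simp only [Set.mem_union, Set.mem_setOf_eq, Finset.coe_insert, Set.mem_insert_iff,
    Finset.coe_singleton, Set.mem_singleton_iff]
  constructor
  · rintro ⟨hp, h3⟩
    by_cases h17 : 17 ≤ ℓ
    · exact Or.inr ⟨hp, h17⟩
    · left
      push_neg at h17
      interval_cases ℓ <;> revert hp <;> decide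
  · rintro (h | ⟨hp, h17⟩)
    · rcases h with rfl | rfl | rfl | rfl | rfl <;> exact ⟨by norm_num, by norm_num⟩
    · exact ⟨hp, by omega⟩

lemma disjoint_aux :
    Disjoint (↑({3, 5, 7, 11, 13} : Finset ℕ) : Set ℕ) {ℓ : ℕ | ℓ.Prime ∧ 17 ≤ ℓ} := by
  rw [Set.disjoint_left]
  intro a ha hb
  simp only [Finset.coe_insert, Set.mem_insert_iff, Finset.coe_singleton,
    Set.mem_singleton_iff] at ha
  have := hb.2
  rcases ha with rfl | rfl | rfl | rfl | rfl <;> omega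



/-- **Rigorous bracketing of the limiting density.**
With `𝒫 = (1743/4096)·∏_{ℓ ≥ 3 prime}(1 − (2/ℓ − 1/ℓ²)^ℓ)` and
`𝒫₀ = (1743/4096)·∏_{ℓ ∈ {3,5,7,11,13}}(1 − (2/ℓ − 1/ℓ²)^ℓ)`, one has
`𝒫₀·∏_{ℓ ≥ 17 prime}(1 − 1/ℓ⁴) < 𝒫 < 𝒫₀`. -/
theorem limiting_density_bracketing :
    ((1743 / 4096 : ℝ) *
        (∏ ℓ ∈ ({3, 5, 7, 11, 13} : Finset ℕ),
          (1 - (2 / (ℓ : ℝ) - 1 / (ℓ : ℝ) ^ 2) ^ ℓ))) *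
      (∏' ℓ : {ℓ : ℕ // ℓ.Prime ∧ 17 ≤ ℓ}, (1 - 1 / ((ℓ : ℕ) : ℝ) ^ 4))
      < (1743 / 4096 : ℝ) *
        (∏' ℓ : {ℓ : ℕ // ℓ.Prime ∧ 3 ≤ ℓ},
          (1 - (2 / ((ℓ : ℕ) : ℝ) - 1 / ((ℓ : ℕ) : ℝ) ^ 2) ^ (ℓ : ℕ))) ∧
    (1743 / 4096 : ℝ) *
        (∏' ℓ : {ℓ : ℕ // ℓ.Prime ∧ 3 ≤ ℓ},
          (1 - (2 / ((ℓ : ℕ) : ℝ) - 1 / ((ℓ : ℕ) : ℝ) ^ 2) ^ (ℓ : ℕ)))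
      < (1743 / 4096 : ℝ) *
        (∏ ℓ ∈ ({3, 5, 7, 11, 13} : Finset ℕ),
          (1 - (2 / (ℓ : ℝ) - 1 / (ℓ : ℝ) ^ 2) ^ ℓ)) := by
    classical
  set F : ℕ → ℝ := fun ℓ => 1 - (2 / (ℓ : ℝ) - 1 / (ℓ : ℝ) ^ 2) ^ ℓ with hF
  set S : Finset ℕ := {3, 5, 7, 11, 13} with hSdef
  set B : Set ℕ := {ℓ : ℕ | ℓ.Prime ∧ 17 ≤ ℓ} with hBdef
  -- positivity and upper bounds for F on B
  have hB3 : ∀ ℓ ∈ B, 3 ≤ ℓ := fun ℓ hℓ => by have := hℓ.2; omega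
  have hFpos : ∀ {ℓ : ℕ}, 3 ≤ ℓ → 0 < F ℓ := by
    intro ℓ hℓ
    obtain ⟨ht0, ht23, h23⟩ := t_bounds hℓ
    have := ht23.trans h23
    simp only [hF]; linarith
  have hFlt1 : ∀ {ℓ : ℕ}, 3 ≤ ℓ → F ℓ < 1 := by
    intro ℓ hℓ
    obtain ⟨ht0, _, _⟩ := t_bounds hℓ
    simp only [hF]; linarith
  -- summabilities
  have hsumF : Summable (fun a : B => Real.log (F a)) := summable_logF_aux B hB3
  have hsumG : Summable (fun a : B => Real.log (1 - 1 / ((a : ℕ) : ℝ) ^ 4)) :=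
    summable_logG_aux
  -- the two infinite products over B
  set SF : ℝ := ∑' a : B, Real.log (F a) with hSF
  set SG : ℝ := ∑' a : B, Real.log (1 - 1 / ((a : ℕ) : ℝ) ^ 4) with hSG
  have hGpos : ∀ a : B, 0 < 1 - 1 / ((a : ℕ) : ℝ) ^ 4 := by
    intro a
    have h17 : (17:ℝ) ≤ ((a:ℕ):ℝ) := by exact_mod_cast a.2.2
    have : 1 / ((a:ℕ):ℝ)^4 ≤ 1/2 := by
      rw [div_le_div_iff₀ (by positivity) (by norm_num)]
      nlinarith [pow_le_pow_left₀ (by norm_num : (0:ℝ) ≤ 17) h17 4]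
    linarith
  have hFB : HasProd (fun a : B => F a) (Real.exp SF) :=
    hasProd_exp_aux _ (fun a => hFpos (hB3 a a.2)) hsumF
  have hGB : HasProd (fun a : B => 1 - 1 / ((a : ℕ) : ℝ) ^ 4) (Real.exp SG) :=
    hasProd_exp_aux _ hGpos hsumG
  -- split product over A
  have hS : HasProd (F ∘ (↑) : (↑S : Set ℕ) → ℝ) (∏ ℓ ∈ S, F ℓ) := S.hasProd F
  have hunion := HasProd.mul_disjoint disjoint_aux hS hFB
  have hA : HasProd (fun a : {ℓ : ℕ // ℓ.Prime ∧ 3 ≤ ℓ} => F a)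
      ((∏ ℓ ∈ S, F ℓ) * Real.exp SF) := by
    have hset := set_split_aux
    rw [← hBdef, ← hSdef] at hset
    rw [← hset] at hunion
    exact hunion
  -- rewrite all tprods
  have eA : (∏' ℓ : {ℓ : ℕ // ℓ.Prime ∧ 3 ≤ ℓ},
      (1 - (2 / ((ℓ : ℕ) : ℝ) - 1 / ((ℓ : ℕ) : ℝ) ^ 2) ^ (ℓ : ℕ)))
      = (∏ ℓ ∈ S, F ℓ) * Real.exp SF := hA.tprod_eq
  have eG : (∏' ℓ : {ℓ : ℕ // ℓ.Prime ∧ 17 ≤ ℓ}, (1 - 1 / ((ℓ : ℕ) : ℝ) ^ 4))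
      = Real.exp SG := hGB.tprod_eq
  -- positivity of the finite prefactor
  have hSprod : 0 < ∏ ℓ ∈ S, F ℓ := by
    apply Finset.prod_pos
    intro ℓ hℓ
    have h3 : 3 ≤ ℓ := by
      simp only [hSdef, Finset.mem_insert, Finset.mem_singleton] at hℓ
      rcases hℓ with rfl | rfl | rfl | rfl | rfl <;> norm_num
    exact hFpos h3
  have hC : (0:ℝ) < 1743 / 4096 * ∏ ℓ ∈ S, F ℓ := by positivity
  -- strict comparison of sums
  have hlogle : ∀ a : B, Real.log (1 - 1 / ((a : ℕ) : ℝ) ^ 4) ≤ Real.log (F a) := by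
    intro a
    have hk := key_lt_aux a.2.2
    apply Real.log_le_log (hGpos a)
    simp only [hF]; linarith
  have h17mem : (17 : ℕ) ∈ B := ⟨by norm_num, le_refl _⟩
  have hlt : SG < SF := by
    apply Summable.tsum_lt_tsum hlogle (i := (⟨17, h17mem⟩ : B)) _ hsumG hsumF
    have hk := key_lt_aux (le_refl 17)
    apply Real.log_lt_log (hGpos _)
    simp only [hF]
    push_cast
    linarith
  have hSFneg : SF < 0 := by
    have h0 : ∀ a : B, Real.log (F a) ≤ (fun _ : B => (0:ℝ)) a := by
      intro a
      exact Real.log_nonpos (hFpos (hB3 a a.2)).le (hFlt1 (hB3 a a.2)).le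
    have := Summable.tsum_lt_tsum h0 (i := (⟨17, h17mem⟩ : B))
      (Real.log_neg (hFpos (hB3 _ h17mem)) (hFlt1 (hB3 _ h17mem))) hsumF summable_zero
    simpa using this
  constructor
  · rw [eA, eG, ← mul_assoc]
    exact mul_lt_mul_of_pos_left (Real.exp_lt_exp.mpr hlt) hC
  · rw [eA, ← mul_assoc]
    calc (1743 / 4096 * ∏ ℓ ∈ S, F ℓ) * Real.exp SF
        < (1743 / 4096 * ∏ ℓ ∈ S, F ℓ) * 1 := by
          apply mul_lt_mul_of_pos_left _ hC
          simpa using Real.exp_lt_one_iff.mpr hSFneg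
    _ = 1743 / 4096 * ∏ ℓ ∈ S, F ℓ := by ring
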